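/- (Burchnall–Chaundy lemma, Weyl algebra form) Let L and M be two ordinary differential operators with polynomial coefficients, i.e. elements of the subalgebra of End(ℂ[x]) generated by D and X, each of positive order, and suppose L∘M = M∘L. Then L and M are algebraically dependent over ℂ: there exists a nonzero polynomial Q ∈ ℂ[λ, μ] in two commuting variables such that Q(L, M) = 0 in End(ℂ[x]). -/

import Mathlib

open Polynomial Finset

/-- The differentiation operator on `ℂ[x]`, as a `ℂ`-linear endomorphism. -/
noncomputable def Dop : Module.End ℂ (Polynomial ℂ) := Polynomial.derivative

/-- The operator of multiplication by `x` on `ℂ[x]`, as a `ℂ`-linear endomorphism. -/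
noncomputable def Xop : Module.End ℂ (Polynomial ℂ) := LinearMap.mulLeft ℂ Polynomial.X

abbrev EndP := Module.End ℂ (Polynomial ℂ)

noncomputable def mop (p : Polynomial ℂ) (j : ℕ) : EndP := LinearMap.mulLeft ℂ p * Dop ^ j

noncomputable def Phi (N : ℕ) (P : ℕ → Polynomial ℂ) : EndP := ∑ j ∈ Finset.range (N+1), mop (P j) j

lemma Dop_pow_X_pow (j k : ℕ) : (Dop ^ j) (X ^ k : Polynomial ℂ) = ((k.descFactorial j : ℂ)) • X ^ (k - j) := by
  induction j with
  | zero => simp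
  | succ j ih =>
    rw [pow_succ', Module.End.mul_apply, ih, map_smul]
    show (k.descFactorial j : ℂ) • derivative (X ^ (k-j) : Polynomial ℂ) = _
    rw [derivative_X_pow, Nat.descFactorial_succ, Nat.sub_sub, Nat.add_comm j 1]
    rw [← Polynomial.smul_eq_C_mul, smul_smul]
    push_cast
    ring_nf

lemma mop_apply (p : Polynomial ℂ) (j : ℕ) (f : Polynomial ℂ) : mop p j f = p * (Dop ^ j) f := rfl

lemma Phi_apply_X_pow (N : ℕ) (P : ℕ → Polynomial ℂ) (k : ℕ) :
    (Phi N P) (X ^ k) = ∑ j ∈ Finset.range (N+1), (k.descFactorial j : ℂ) • (P j * X ^ (k - j)) := by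
  rw [Phi, LinearMap.sum_apply]
  refine Finset.sum_congr rfl fun j _ => ?_
  rw [mop_apply, Dop_pow_X_pow, mul_smul_comm]

lemma Phi_eq_zero_coeff {N : ℕ} {P : ℕ → Polynomial ℂ} (h : Phi N P = 0) :
    ∀ k ≤ N, P k = 0 := by
  intro k
  induction k using Nat.strong_induction_on with
  | _ k ih =>
    intro hk
    have h0 : (Phi N P) (X ^ k) = 0 := by rw [h]; rfl
    rw [Phi_apply_X_pow] at h0
    rw [Finset.sum_eq_single k] at h0
    · rw [Nat.sub_self, pow_zero, mul_one, smul_eq_zero] at h0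
      rcases h0 with h0 | h0
      · exact absurd (Nat.cast_eq_zero.mp h0)
          (Nat.descFactorial_self k ▸ k.factorial_ne_zero)
      · exact h0
    · intro j hj hjk
      rcases Nat.lt_or_ge j k with hlt | hgt
      · rw [ih j hlt (le_of_lt (lt_of_lt_of_le hlt hk)), zero_mul, smul_zero]
      · have : k.descFactorial j = 0 := Nat.descFactorial_eq_zero_iff_lt.mpr (lt_of_le_of_ne hgt (Ne.symm hjk))
        rw [this]; simp
    · intro hk'; exact absurd (Finset.mem_range.mpr (Nat.lt_succ_of_le hk)) hk'

noncomputable def mopL (j : ℕ) : Polynomial ℂ →ₗ[ℂ] EndP where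
  toFun p := mop p j
  map_add' p q := by
    apply LinearMap.ext; intro f
    show (p + q) * (Dop ^ j) f = p * (Dop ^ j) f + q * (Dop ^ j) f
    ring
  map_smul' c p := by
    apply LinearMap.ext; intro f
    show (c • p) * (Dop ^ j) f = c • (p * (Dop ^ j) f)
    rw [smul_mul_assoc]

lemma mop_zero (j : ℕ) : mop 0 j = 0 := map_zero (mopL j)
lemma mop_add (p q : Polynomial ℂ) (j : ℕ) : mop (p + q) j = mop p j + mop q j := map_add (mopL j) p q
lemma mop_sub (p q : Polynomial ℂ) (j : ℕ) : mop (p - q) j = mop p j - mop q j := map_sub (mopL j) p q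
lemma mop_smul (c : ℂ) (p : Polynomial ℂ) (j : ℕ) : mop (c • p) j = c • mop p j := map_smul (mopL j) c p
lemma mop_sum {ι : Type*} (I : Finset ι) (g : ι → Polynomial ℂ) (j : ℕ) :
    mop (∑ i ∈ I, g i) j = ∑ i ∈ I, mop (g i) j := map_sum (mopL j) g I

lemma Dop_mul_mulLeft (q : Polynomial ℂ) :
    Dop * LinearMap.mulLeft ℂ q = LinearMap.mulLeft ℂ q * Dop + LinearMap.mulLeft ℂ (derivative q) := by
  apply LinearMap.ext; intro f
  show derivative (q * f) = q * derivative f + derivative q * f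
  rw [derivative_mul]; ring

lemma Dop_mul_mop (r : Polynomial ℂ) (m : ℕ) :
    Dop * mop r m = mop r (m+1) + mop (derivative r) m := by
  show Dop * (LinearMap.mulLeft ℂ r * Dop ^ m) = _
  rw [← mul_assoc, Dop_mul_mulLeft, add_mul, mul_assoc, ← pow_succ']
  rfl

lemma leibniz (a : ℕ) (q : Polynomial ℂ) :
    Dop ^ a * LinearMap.mulLeft ℂ q
      = ∑ t ∈ Finset.range (a+1), (a.choose t : ℂ) • mop (derivative^[t] q) (a - t) := by
  induction a with
  | zero =>
    simp only [pow_zero, one_mul, Finset.range_one, Finset.sum_singleton]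
    simp [mop]
  | succ a ih =>
    have key : ∀ t ∈ Finset.range (a+1),
        (a.choose t : ℂ) • (Dop * mop (derivative^[t] q) (a - t))
          = (a.choose t : ℂ) • mop (derivative^[t] q) (a + 1 - t)
            + (a.choose t : ℂ) • mop (derivative^[t+1] q) (a - t) := by
      intro t ht
      rw [Dop_mul_mop, smul_add, Nat.sub_add_comm (Nat.lt_succ_iff.mp (Finset.mem_range.mp ht)),
        Function.iterate_succ_apply' ]
    have lhs : Dop ^ (a+1) * LinearMap.mulLeft ℂ q
        = ∑ t ∈ Finset.range (a+1), ((a.choose t : ℂ) • mop (derivative^[t] q) (a + 1 - t)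
            + (a.choose t : ℂ) • mop (derivative^[t+1] q) (a - t)) := by
      rw [pow_succ', mul_assoc, ih, Finset.mul_sum]
      refine Finset.sum_congr rfl fun t ht => ?_
      rw [mul_smul_comm]
      exact key t ht
    rw [lhs, Finset.sum_add_distrib]
    -- RHS manipulation
    have hF : ∀ t, t ∈ Finset.range (a+2) → True := fun _ _ => trivial
    rw [Finset.sum_range_succ' (fun t => ((a+1).choose t : ℂ) • mop (derivative^[t] q) (a + 1 - t)) (a+1)]
    have e1 : ∀ t, (((a+1).choose (t+1) : ℕ) : ℂ) = (a.choose t : ℂ) + (a.choose (t+1) : ℂ) := by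
      intro t; rw [Nat.choose_succ_succ]; push_cast; ring
    have e2 : ∑ t ∈ Finset.range (a+1), (((a+1).choose (t+1) : ℕ) : ℂ) • mop (derivative^[t+1] q) (a + 1 - (t+1))
        = ∑ t ∈ Finset.range (a+1), ((a.choose t : ℂ) • mop (derivative^[t+1] q) (a - t)
            + (a.choose (t+1) : ℂ) • mop (derivative^[t+1] q) (a - t)) := by
      refine Finset.sum_congr rfl fun t ht => ?_
      rw [e1, add_smul, Nat.succ_sub_succ]
    rw [e2, Finset.sum_add_distrib]
    have e3 : ∑ t ∈ Finset.range (a+1), (a.choose (t+1) : ℂ) • mop (derivative^[t+1] q) (a - t)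
          + (((a+1).choose 0 : ℕ) : ℂ) • mop (derivative^[0] q) (a + 1 - 0)
        = ∑ t ∈ Finset.range (a+1), (a.choose t : ℂ) • mop (derivative^[t] q) (a + 1 - t) := by
      have expand := Finset.sum_range_succ' (fun t => (a.choose t : ℂ) • mop (derivative^[t] q) (a + 1 - t)) (a+1)
      have drop : ∑ t ∈ Finset.range (a+2), (a.choose t : ℂ) • mop (derivative^[t] q) (a + 1 - t)
          = ∑ t ∈ Finset.range (a+1), (a.choose t : ℂ) • mop (derivative^[t] q) (a + 1 - t) := by
        rw [Finset.sum_range_succ, Nat.choose_succ_self]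
        simp
      rw [drop] at expand
      have cg : ∑ t ∈ Finset.range (a+1), (a.choose (t+1) : ℂ) • mop (derivative^[t+1] q) (a - t)
          = ∑ t ∈ Finset.range (a+1), (a.choose (t+1) : ℂ) • mop (derivative^[t+1] q) (a + 1 - (t+1)) := by
        refine Finset.sum_congr rfl fun t ht => ?_
        rw [Nat.succ_sub_succ]
      simp only [Nat.choose_zero_right] at expand ⊢
      rw [cg, ← expand]
    rw [add_assoc, e3]
    ring_nf
    rw [add_comm]

lemma mulLeft_mop_Dpow (p r : Polynomial ℂ) (m b : ℕ) :
    LinearMap.mulLeft ℂ p * mop r m * Dop ^ b = mop (p * r) (m + b) := by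
  show LinearMap.mulLeft ℂ p * (LinearMap.mulLeft ℂ r * Dop ^ m) * Dop ^ b = LinearMap.mulLeft ℂ (p*r) * Dop ^ (m+b)
  have h : LinearMap.mulLeft ℂ p * LinearMap.mulLeft ℂ r = LinearMap.mulLeft ℂ (p*r) := by
    rw [LinearMap.mulLeft_mul]; rfl
  rw [← mul_assoc, h, mul_assoc, ← pow_add]

lemma mop_mul_mop (p q : Polynomial ℂ) (a b : ℕ) :
    mop p a * mop q b = ∑ t ∈ Finset.range (a+1), (a.choose t : ℂ) • mop (p * derivative^[t] q) (a + b - t) := by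
  show LinearMap.mulLeft ℂ p * Dop ^ a * (LinearMap.mulLeft ℂ q * Dop ^ b) = _
  rw [mul_assoc, ← mul_assoc (Dop ^ a), leibniz, Finset.sum_mul, Finset.mul_sum]
  refine Finset.sum_congr rfl fun t ht => ?_
  rw [smul_mul_assoc, mul_smul_comm, ← mul_assoc, mulLeft_mop_Dpow,
    Nat.sub_add_comm (Nat.lt_succ_iff.mp (Finset.mem_range.mp ht))]

lemma collect {ι : Type*} [DecidableEq ι] (I : Finset ι) (f : ι → Polynomial ℂ) (d : ι → ℕ) (N : ℕ)
    (hd : ∀ i ∈ I, d i ≤ N) :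
    ∑ i ∈ I, mop (f i) (d i) = Phi N (fun s => ∑ i ∈ I, if d i = s then f i else 0) := by
  classical
  rw [Phi]
  have : ∀ s, mop (∑ i ∈ I, if d i = s then f i else 0) s = ∑ i ∈ I, (if d i = s then mop (f i) s else 0) := by
    intro s
    rw [mop_sum]
    refine Finset.sum_congr rfl fun i _ => ?_
    split <;> simp [mop_zero]
  calc ∑ i ∈ I, mop (f i) (d i)
      = ∑ i ∈ I, ∑ s ∈ Finset.range (N+1), (if d i = s then mop (f i) s else 0) := by
        refine Finset.sum_congr rfl fun i hi => ?_
        rw [Finset.sum_ite_eq (Finset.range (N+1)) (d i) (fun s => mop (f i) s)]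
        simp [Nat.lt_succ_of_le (hd i hi)]
    _ = ∑ s ∈ Finset.range (N+1), ∑ i ∈ I, (if d i = s then mop (f i) s else 0) := Finset.sum_comm
    _ = _ := by
        refine Finset.sum_congr rfl fun s _ => ?_
        rw [this]

lemma Phi_sub (N : ℕ) (P P' : ℕ → Polynomial ℂ) :
    Phi N (fun j => P j - P' j) = Phi N P - Phi N P' := by
  rw [Phi, Phi, Phi, ← Finset.sum_sub_distrib]
  exact Finset.sum_congr rfl fun j _ => mop_sub _ _ _

lemma Phi_coeff_eq {N : ℕ} {P P' : ℕ → Polynomial ℂ} (h : Phi N P = Phi N P') :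
    ∀ s ≤ N, P s = P' s := by
  intro s hs
  have h0 : Phi N (fun j => P j - P' j) = 0 := by rw [Phi_sub, h, sub_self]
  have := Phi_eq_zero_coeff h0 s hs
  exact sub_eq_zero.mp this

noncomputable def Rp (P Q : ℕ → Polynomial ℂ) (a b : ℕ) : ℕ → Polynomial ℂ := fun s =>
  ∑ x ∈ (Finset.range (a+1)) ×ˢ (Finset.range (b+1)) ×ˢ (Finset.range (a+1)),
    if x.1 + x.2.1 - x.2.2 = s then (x.1.choose x.2.2 : ℂ) • (P x.1 * derivative^[x.2.2] (Q x.2.1)) else 0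

lemma Phi_mul (P Q : ℕ → Polynomial ℂ) (a b : ℕ) :
    Phi a P * Phi b Q = Phi (a+b) (Rp P Q a b) := by
  classical
  have step1 : Phi a P * Phi b Q
      = ∑ x ∈ (Finset.range (a+1)) ×ˢ (Finset.range (b+1)) ×ˢ (Finset.range (a+1)),
          mop ((x.1.choose x.2.2 : ℂ) • (P x.1 * derivative^[x.2.2] (Q x.2.1))) (x.1 + x.2.1 - x.2.2) := by
    rw [Phi, Phi, Finset.sum_mul_sum]
    rw [Finset.sum_product, ]
    refine Finset.sum_congr rfl fun j hj => ?_
    rw [Finset.sum_product]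
    refine Finset.sum_congr rfl fun k hk => ?_
    rw [mop_mul_mop]
    have hsub : Finset.range (j+1) ⊆ Finset.range (a+1) :=
      Finset.range_subset_range.mpr (Nat.succ_le_succ (Nat.lt_succ_iff.mp (Finset.mem_range.mp hj)))
    rw [← Finset.sum_subset hsub]
    · refine Finset.sum_congr rfl fun t ht => ?_
      rw [mop_smul]
    · intro t ht htj
      have : j < t := by
        have h2 : ¬ (t < j+1) := fun h => htj (Finset.mem_range.mpr h)
        omega
      rw [Nat.choose_eq_zero_of_lt this]
      simp [mop_zero]
  rw [step1, collect _ _ _ (a+b)]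
  · rfl
  · rintro ⟨j, k, t⟩ hx
    simp only [Finset.mem_product, Finset.mem_range] at hx
    show j + k - t ≤ a + b
    omega

lemma comm_coeff {A B : EndP} {P Q : ℕ → Polynomial ℂ} {a b : ℕ}
    (hA : A = Phi a P) (hB : B = Phi b Q) (h : A * B = B * A) :
    ∀ s ≤ a + b, Rp P Q a b s = Rp Q P b a s := by
  intro s hs
  have h1 : Phi (a+b) (Rp P Q a b) = Phi (b+a) (Rp Q P b a) := by
    rw [← Phi_mul, ← Phi_mul, ← hA, ← hB, h]
  rw [Nat.add_comm b a] at h1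
  exact Phi_coeff_eq h1 s hs

lemma Rp_top_sub_one {P Q : ℕ → Polynomial ℂ} {a b : ℕ} (ha : 1 ≤ a) (hb : 1 ≤ b) :
    Rp P Q a b (a+b-1) = (a:ℂ) • (P a * derivative (Q b)) + P (a-1) * Q b + P a * Q (b-1) := by
  classical
  rw [Rp]
  rw [← Finset.sum_subset (s₁ := ({(a,(b,1)), (a-1,(b,0)), (a,(b-1,0))} : Finset (ℕ × ℕ × ℕ)))]
  · have hne1 : ((a,(b,1)) : ℕ × ℕ × ℕ) ∉ ({(a-1,(b,0)), (a,(b-1,0))} : Finset (ℕ × ℕ × ℕ)) := by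
      simp [Prod.ext_iff]
    have hne2 : ((a-1,(b,0)) : ℕ × ℕ × ℕ) ∉ ({(a,(b-1,0))} : Finset (ℕ × ℕ × ℕ)) := by
      simp [Prod.ext_iff]; omega
    rw [Finset.sum_insert hne1, Finset.sum_insert hne2, Finset.sum_singleton]
    rw [if_pos rfl, if_pos (by omega : a-1 + b - 0 = a+b-1), if_pos (by omega : a + (b-1) - 0 = a+b-1)]
    simp only [Nat.choose_one_right, Nat.choose_zero_right, Nat.cast_one, one_smul,
      Function.iterate_one, Function.iterate_zero, id_eq]
    rw [add_assoc]
  · rintro ⟨j, k, t⟩ hx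
    simp only [Finset.mem_insert, Finset.mem_singleton, Prod.ext_iff] at hx
    simp only [Finset.mem_product, Finset.mem_range]
    omega
  · rintro ⟨j, k, t⟩ hx hnx
    simp only [Finset.mem_product, Finset.mem_range] at hx
    obtain ⟨hj, hk, ht⟩ := hx
    by_cases hcond : j + k - t = a + b - 1
    · rw [if_pos hcond]
      by_cases htj : t ≤ j
      · exfalso
        apply hnx
        simp only [Finset.mem_insert, Finset.mem_singleton, Prod.ext_iff]
        omega
      · rw [Nat.choose_eq_zero_of_lt (by omega), Nat.cast_zero, zero_smul]
    · rw [if_neg hcond]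

lemma comm_top {A B : EndP} {P Q : ℕ → Polynomial ℂ} {a b : ℕ} (ha : 1 ≤ a) (hb : 1 ≤ b)
    (hA : A = Phi a P) (hB : B = Phi b Q) (h : A * B = B * A) :
    (a:ℂ) • (P a * derivative (Q b)) = (b:ℂ) • (Q b * derivative (P a)) := by
  have h1 := comm_coeff hA hB h (a+b-1) (by omega)
  rw [Rp_top_sub_one ha hb] at h1
  rw [Nat.add_comm a b] at h1
  rw [Rp_top_sub_one hb ha] at h1
  rw [smul_eq_C_mul, smul_eq_C_mul] at h1 ⊢
  linear_combination h1

lemma Rp_right_zero {P Q : ℕ → Polynomial ℂ} {a : ℕ} (ha : 1 ≤ a) :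
    Rp P Q a 0 (a-1) = (a:ℂ) • (P a * derivative (Q 0)) + P (a-1) * Q 0 := by
  classical
  rw [Rp]
  rw [← Finset.sum_subset (s₁ := ({(a,(0,1)), (a-1,(0,0))} : Finset (ℕ × ℕ × ℕ)))]
  · have hne1 : ((a,(0,1)) : ℕ × ℕ × ℕ) ∉ ({(a-1,(0,0))} : Finset (ℕ × ℕ × ℕ)) := by
      simp [Prod.ext_iff]
    rw [Finset.sum_insert hne1, Finset.sum_singleton]
    rw [if_pos (by omega : a + 0 - 1 = a-1), if_pos (by omega : a-1 + 0 - 0 = a-1)]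
    simp [Nat.choose_one_right]
  · rintro ⟨j, k, t⟩ hx
    simp only [Finset.mem_insert, Finset.mem_singleton, Prod.ext_iff] at hx
    simp only [Finset.mem_product, Finset.mem_range]
    omega
  · rintro ⟨j, k, t⟩ hx hnx
    simp only [Finset.mem_product, Finset.mem_range] at hx
    obtain ⟨hj, hk, ht⟩ := hx
    show (if j + k - t = a - 1 then (j.choose t : ℂ) • (P j * derivative^[t] (Q k)) else 0) = 0
    by_cases hcond : j + k - t = a - 1
    · rw [if_pos hcond]
      by_cases htj : t ≤ j
      · exfalso
        apply hnx
        simp only [Finset.mem_insert, Finset.mem_singleton, Prod.ext_iff]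
        omega
      · rw [Nat.choose_eq_zero_of_lt (by omega), Nat.cast_zero, zero_smul]
    · rw [if_neg hcond]

lemma Rp_left_zero {P Q : ℕ → Polynomial ℂ} {a : ℕ} (ha : 1 ≤ a) :
    Rp Q P 0 a (a-1) = Q 0 * P (a-1) := by
  classical
  rw [Rp]
  rw [← Finset.sum_subset (s₁ := ({(0,(a-1,0))} : Finset (ℕ × ℕ × ℕ)))]
  · rw [Finset.sum_singleton]
    rw [if_pos (by omega : 0 + (a-1) - 0 = a-1)]
    simp
  · rintro ⟨j, k, t⟩ hx
    simp only [Finset.mem_singleton, Prod.ext_iff] at hx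
    simp only [Finset.mem_product, Finset.mem_range]
    omega
  · rintro ⟨j, k, t⟩ hx hnx
    simp only [Finset.mem_product, Finset.mem_range] at hx
    obtain ⟨hj, hk, ht⟩ := hx
    show (if j + k - t = a - 1 then (j.choose t : ℂ) • (Q j * derivative^[t] (P k)) else 0) = 0
    by_cases hcond : j + k - t = a - 1
    · rw [if_pos hcond]
      by_cases htj : t ≤ j
      · exfalso
        apply hnx
        simp only [Finset.mem_singleton, Prod.ext_iff]
        omega
      · rw [Nat.choose_eq_zero_of_lt (by omega), Nat.cast_zero, zero_smul]
    · rw [if_neg hcond]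

lemma comm_order_zero {A : EndP} {P : ℕ → Polynomial ℂ} {a : ℕ} (ha : 1 ≤ a)
    (hA : A = Phi a P) (q : Polynomial ℂ) (h : A * mop q 0 = mop q 0 * A) :
    (a:ℂ) • (P a * derivative q) = 0 := by
  have hB : mop q 0 = Phi 0 (fun _ => q) := by
    rw [Phi]
    simp
  have h1 := comm_coeff hA hB h (a-1) (by omega)
  rw [Rp_right_zero ha, Rp_left_zero ha] at h1
  rw [smul_eq_C_mul] at h1 ⊢
  linear_combination h1

lemma const_case {p q : Polynomial ℂ} (hp : p ≠ 0) (hq' : derivative q = 0)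
    (h : p * derivative q = q * derivative p) : ∃ c : ℂ, q = c • p := by
  by_cases hq0 : q = 0
  · exact ⟨0, by simp [hq0]⟩
  · have hp' : derivative p = 0 := by
      rw [hq', mul_zero] at h
      rcases mul_eq_zero.mp h.symm with h1 | h1
      · exact absurd h1 hq0
      · exact h1
    have hqc := eq_C_of_derivative_eq_zero hq'
    have hpc := eq_C_of_derivative_eq_zero hp'
    refine ⟨q.coeff 0 / p.coeff 0, ?_⟩
    have hp0 : p.coeff 0 ≠ 0 := by
      intro h0; exact hp (by rw [hpc, h0, map_zero])
    nth_rewrite 1 [hqc]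
    nth_rewrite 2 [hpc]
    rw [smul_C, smul_eq_mul, div_mul_cancel₀ _ hp0]

lemma derivative_leading {q : Polynomial ℂ} (hq : 1 ≤ q.natDegree) :
    (derivative q).natDegree = q.natDegree - 1 ∧
    (derivative q).coeff (q.natDegree - 1) = q.leadingCoeff * (q.natDegree : ℂ) := by
  have hc : (derivative q).coeff (q.natDegree - 1) = q.leadingCoeff * (q.natDegree : ℂ) := by
    rw [coeff_derivative]
    have : q.natDegree - 1 + 1 = q.natDegree := by omega
    rw [this, leadingCoeff, Nat.cast_sub hq]
    push_cast
    ring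
  constructor
  · refine le_antisymm (natDegree_derivative_le q) (le_natDegree_of_ne_zero ?_)
    rw [hc]
    exact mul_ne_zero (leadingCoeff_ne_zero.mpr (fun h0 => by simp [h0] at hq))
      (Nat.cast_ne_zero.mpr (by omega))
  · exact hc

lemma wronskian_aux : ∀ (d : ℕ) (p q : Polynomial ℂ), q.natDegree ≤ d → p ≠ 0 →
    p * derivative q = q * derivative p → ∃ c : ℂ, q = c • p := by
  intro d
  induction d with
  | zero =>
    intro p q hdq hp h
    have hq' : derivative q = 0 := by
      have : q.natDegree = 0 := Nat.le_zero.mp hdq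
      rw [eq_C_of_natDegree_eq_zero this, derivative_C]
    exact const_case hp hq' h
  | succ d ih =>
    intro p q hdq hp h
    by_cases hq' : derivative q = 0
    · exact const_case hp hq' h
    · have hq0 : q ≠ 0 := fun h0 => hq' (by rw [h0, derivative_zero])
      have hp' : derivative p ≠ 0 := by
        intro h0
        rw [h0, mul_zero] at h
        rcases mul_eq_zero.mp h with h1 | h1
        · exact hp h1
        · exact hq' h1
      have hdq1 : 1 ≤ q.natDegree := by
        by_contra hcon
        have h0 : q.natDegree = 0 := by omega
        exact hq' (by rw [eq_C_of_natDegree_eq_zero h0, derivative_C])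
      have hdp1 : 1 ≤ p.natDegree := by
        by_contra hcon
        have h0 : p.natDegree = 0 := by omega
        exact hp' (by rw [eq_C_of_natDegree_eq_zero h0, derivative_C])
      obtain ⟨hdQ, hcQ⟩ := derivative_leading hdq1
      obtain ⟨hdP, hcP⟩ := derivative_leading hdp1
      -- compare degrees and leading coefficients
      have hlead := congrArg Polynomial.leadingCoeff h
      rw [leadingCoeff_mul, leadingCoeff_mul] at hlead
      have hlQ : (derivative q).leadingCoeff = q.leadingCoeff * (q.natDegree : ℂ) := by
        rw [leadingCoeff, hdQ, hcQ]
      have hlP : (derivative p).leadingCoeff = p.leadingCoeff * (p.natDegree : ℂ) := by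
        rw [leadingCoeff, hdP, hcP]
      rw [hlQ, hlP] at hlead
      have hlp : p.leadingCoeff ≠ 0 := leadingCoeff_ne_zero.mpr hp
      have hlq : q.leadingCoeff ≠ 0 := leadingCoeff_ne_zero.mpr hq0
      have hdeq : q.natDegree = p.natDegree := by
        have h2 : (p.leadingCoeff * q.leadingCoeff) * (q.natDegree:ℂ)
            = (p.leadingCoeff * q.leadingCoeff) * (p.natDegree:ℂ) := by
          linear_combination hlead
        have := mul_left_cancel₀ (mul_ne_zero hlp hlq) h2
        exact_mod_cast this
      set c := q.leadingCoeff / p.leadingCoeff with hc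
      set r := q - c • p with hr
      have hrprop : p * derivative r = r * derivative p := by
        have : derivative r = derivative q - c • derivative p := by
          rw [hr, derivative_sub, derivative_smul]
        rw [this, hr]
        rw [smul_eq_C_mul, smul_eq_C_mul]
        ring_nf
        linear_combination h
      have hrcoeff : r.coeff q.natDegree = 0 := by
        rw [hr, coeff_sub, coeff_smul, smul_eq_mul, ← leadingCoeff, hdeq, ← leadingCoeff, hc,
          div_mul_cancel₀ _ hlp, sub_self]
      by_cases hr0 : r = 0
      · exact ⟨c, by rw [← sub_eq_zero, ← hr, hr0]⟩
      · have hdr : r.natDegree ≤ d := by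
          have hle : r.natDegree ≤ q.natDegree := by
            rw [hr]
            refine le_trans (natDegree_sub_le _ _) ?_
            simp only [max_le_iff]
            exact ⟨le_refl _, le_trans (natDegree_smul_le _ _) (le_of_eq hdeq.symm)⟩
          have hne : r.natDegree ≠ q.natDegree := by
            intro heq
            exact hr0 (leadingCoeff_eq_zero.mp (by rw [leadingCoeff, heq, hrcoeff]))
          omega
        obtain ⟨c', hc'⟩ := ih p r hdr hp hrprop
        exact ⟨c + c', by rw [add_smul, ← hc', hr]; ring⟩

noncomputable def PhiL (N : ℕ) : ((Fin (N+1)) → Polynomial ℂ) →ₗ[ℂ] EndP :=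
  ∑ j : Fin (N+1), (mopL (j : ℕ)).comp (LinearMap.proj j)

lemma PhiL_eq (N : ℕ) (P : ℕ → Polynomial ℂ) : PhiL N (fun j => P j) = Phi N P := by
  rw [PhiL, Phi, LinearMap.sum_apply]
  rw [← Fin.sum_univ_eq_sum_range (fun j => mop (P j) j) (N+1)]
  rfl

lemma PhiL_ker (N : ℕ) : LinearMap.ker (PhiL N) = ⊥ := by
  rw [LinearMap.ker_eq_bot']
  intro P hP
  set P' : ℕ → Polynomial ℂ := fun j => if h : j < N+1 then P ⟨j, h⟩ else 0 with hP'
  have hfe : (fun j : Fin (N+1) => P' (j : ℕ)) = P := by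
    funext j
    simp [hP', j.isLt]
    exact fun h => absurd h (not_lt.mpr j.is_le)
  have h0 : Phi N P' = 0 := by
    rw [← PhiL_eq, hfe, hP]
  funext j
  have hz := Phi_eq_zero_coeff h0 j (Nat.lt_succ_iff.mp j.isLt)
  show P j = 0
  rw [← hz]
  simp [hP', j.isLt]
  exact fun h => absurd h (not_lt.mpr j.is_le)

noncomputable def sigmaL (N : ℕ) : EndP →ₗ[ℂ] (Fin (N+1) → Polynomial ℂ) :=
  Classical.choose ((PhiL N).exists_leftInverse_of_injective (PhiL_ker N))

lemma sigmaL_spec (N : ℕ) : (sigmaL N).comp (PhiL N) = LinearMap.id :=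
  Classical.choose_spec ((PhiL N).exists_leftInverse_of_injective (PhiL_ker N))

noncomputable def coefTop (N : ℕ) : EndP →ₗ[ℂ] Polynomial ℂ :=
  (LinearMap.proj (Fin.last N)).comp (sigmaL N)

lemma coefTop_spec (N : ℕ) (P : ℕ → Polynomial ℂ) : coefTop N (Phi N P) = P N := by
  rw [← PhiL_eq, coefTop, LinearMap.comp_apply]
  have : sigmaL N (PhiL N (fun j => P j)) = (fun j : Fin (N+1) => P j) := by
    have := congrArg (fun f => f (fun j : Fin (N+1) => P (j:ℕ))) (sigmaL_spec N)
    simpa using this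
  rw [this]
  rfl

noncomputable def RepSub (N : ℕ) : Submodule ℂ EndP := LinearMap.range (PhiL N)

lemma mem_RepSub {A : EndP} {N : ℕ} : A ∈ RepSub N ↔ ∃ P : ℕ → Polynomial ℂ, A = Phi N P := by
  constructor
  · rintro ⟨P, rfl⟩
    refine ⟨fun j => if h : j < N+1 then P ⟨j, h⟩ else 0, ?_⟩
    rw [← PhiL_eq]
    congr 1
    funext j
    simp [j.isLt]
  · rintro ⟨P, rfl⟩
    exact ⟨fun j => P j, PhiL_eq N P⟩

lemma Phi_pad {N N' : ℕ} (h : N ≤ N') (P : ℕ → Polynomial ℂ) :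
    Phi N P = Phi N' (fun j => if j ≤ N then P j else 0) := by
  rw [Phi, Phi, ← Finset.sum_subset (Finset.range_subset_range.mpr (Nat.succ_le_succ h))
      (fun j _ hjn => by
        have hne : ¬ j ≤ N := fun hc => hjn (Finset.mem_range.mpr (Nat.lt_succ_of_le hc))
        rw [if_neg hne, mop_zero])]
  refine Finset.sum_congr rfl fun j hj => ?_
  rw [if_pos (Nat.lt_succ_iff.mp (Finset.mem_range.mp hj))]

lemma RepSub_mono {N N' : ℕ} (h : N ≤ N') : RepSub N ≤ RepSub N' := by
  intro A hA
  obtain ⟨P, rfl⟩ := mem_RepSub.mp hA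
  exact mem_RepSub.mpr ⟨_, Phi_pad h P⟩

lemma mop_C_zero (c : ℂ) : mop (C c) 0 = c • (1 : EndP) := by
  apply LinearMap.ext; intro f
  rw [mop_apply, LinearMap.smul_apply, Module.End.one_apply]
  rw [pow_zero]
  rw [Module.End.one_apply]
  rw [smul_eq_C_mul]


noncomputable def extF {N : ℕ} (u : Fin (N+1) → Polynomial ℂ) : ℕ → Polynomial ℂ :=
  fun j => if h : j < N+1 then u ⟨j, h⟩ else 0

lemma PhiL_eq_ext {N : ℕ} (u : Fin (N+1) → Polynomial ℂ) : PhiL N u = Phi N (extF u) := by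
  rw [← PhiL_eq]
  congr 1
  funext j
  simp [extF, j.isLt]

lemma extF_top {N : ℕ} (u : Fin (N+1) → Polynomial ℂ) : extF u (N) = u (Fin.last N) := by
  simp [extF, Fin.last]

noncomputable def resL (N : ℕ) : (Fin (N+2) → Polynomial ℂ) →ₗ[ℂ] (Fin (N+1) → Polynomial ℂ) :=
  LinearMap.funLeft ℂ _ Fin.castSucc

lemma drop_top {N : ℕ} {u : Fin (N+2) → Polynomial ℂ} (h : u (Fin.last (N+1)) = 0) :
    PhiL (N+1) u = PhiL N (resL N u) := by
  rw [PhiL_eq_ext, PhiL_eq_ext, Phi, Phi]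
  rw [Finset.sum_range_succ]
  have htop : extF u (N+1) = 0 := by rw [extF_top, h]
  rw [htop, mop_zero, add_zero]
  refine Finset.sum_congr rfl fun j hj => ?_
  have hj1 : j < N+1 := Finset.mem_range.mp hj
  have hj2 : j < N+2 := Nat.lt_succ_of_lt hj1
  congr 1
  simp only [extF, dif_pos hj1, dif_pos hj2]
  rfl

set_option synthInstance.maxHeartbeats 1000000 in
set_option maxHeartbeats 2000000 in
lemma rank_le_main (L : EndP) (n : ℕ) (hn : 1 ≤ n) (Pl : ℕ → Polynomial ℂ)
    (hL : L = Phi n Pl) (hPl : Pl n ≠ 0) :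
    ∀ (N : ℕ) (U : Submodule ℂ (Fin (N+1) → Polynomial ℂ)),
      (∀ u ∈ U, ∀ w ∈ U, PhiL N u * PhiL N w = PhiL N w * PhiL N u) →
      (∀ u ∈ U, PhiL N u * L = L * PhiL N u) →
      Module.rank ℂ U ≤ (N : Cardinal) + 1 := by
  intro N
  induction N with
  | zero =>
    intro U hcommU hcommL
    have hsub : U ≤ Submodule.span ℂ ({(fun _ => 1 : Fin 1 → Polynomial ℂ)} : Set (Fin 1 → Polynomial ℂ)) := by
      intro u hu
      have hA0 : PhiL 0 u = mop (extF u 0) 0 := by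
        rw [PhiL_eq_ext, Phi, Finset.sum_range_one]
      have hq : (n:ℂ) • (Pl n * derivative (extF u 0)) = 0 := by
        refine comm_order_zero hn hL (extF u 0) ?_
        rw [← hA0]
        exact (hcommL u hu).symm
      have hd : derivative (extF u 0) = 0 := by
        rcases smul_eq_zero.mp hq with h1 | h1
        · exact absurd (Nat.cast_eq_zero.mp h1) (by omega)
        · rcases mul_eq_zero.mp h1 with h2 | h2
          · exact absurd h2 hPl
          · exact h2
      have hc := eq_C_of_derivative_eq_zero hd
      have hu0 : u 0 = C ((extF u 0).coeff 0) := by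
        rw [← hc]
        simp [extF]
      refine Submodule.mem_span_singleton.mpr ⟨(extF u 0).coeff 0, ?_⟩
      funext i
      have : i = 0 := Fin.ext (by omega)
      rw [this]
      show ((extF u 0).coeff 0) • (1 : Polynomial ℂ) = u 0
      rw [hu0, smul_eq_C_mul, mul_one]
    calc Module.rank ℂ U ≤ Module.rank ℂ (Submodule.span ℂ ({(fun _ => 1 : Fin 1 → Polynomial ℂ)} : Set (Fin 1 → Polynomial ℂ))) :=
          Submodule.rank_mono hsub
      _ ≤ Cardinal.mk ({(fun _ => 1 : Fin 1 → Polynomial ℂ)} : Set (Fin 1 → Polynomial ℂ)) := rank_span_le _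
      _ ≤ 1 := le_of_eq (Cardinal.mk_singleton _)
      _ ≤ (0 : Cardinal) + 1 := by rw [zero_add]
  | succ N ih =>
    intro U hcommU hcommL
    set φ : ↥U →ₗ[ℂ] Polynomial ℂ := (LinearMap.proj (Fin.last (N+1))).comp U.subtype with hφ
    have hφval : ∀ x : ↥U, φ x = (x : Fin (N+2) → Polynomial ℂ) (Fin.last (N+1)) := fun x => rfl
    set f : ↥U →ₗ[ℂ] (Fin (N+1) → Polynomial ℂ) := (resL N).comp U.subtype with hf
    set U' : Submodule ℂ (Fin (N+1) → Polynomial ℂ) := Submodule.map f (LinearMap.ker φ) with hU'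
    -- transport of operators
    have htrans : ∀ x : ↥U, φ x = 0 → PhiL N (f x) = PhiL (N+1) (x : Fin (N+2) → Polynomial ℂ) := by
      intro x hx
      rw [hφval] at hx
      exact (drop_top hx).symm
    have hrankker : Module.rank ℂ (LinearMap.ker φ) ≤ (N : Cardinal) + 1 := by
      have hmem : ∀ x : ↥(LinearMap.ker φ), f x.1 ∈ U' := by
        intro x
        exact ⟨x.1, x.2, rfl⟩
      have hinj : Function.Injective
          (LinearMap.codRestrict U' (f.comp (LinearMap.ker φ).subtype) (fun x => hmem x) :
            ↥(LinearMap.ker φ) →ₗ[ℂ] ↥U') := by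
        intro x y hxy
        have h1 := congrArg Subtype.val hxy
        change resL N (x.1 : Fin (N+2) → Polynomial ℂ) = resL N (y.1 : Fin (N+2) → Polynomial ℂ) at h1
        have hres : resL N (x.1 : Fin (N+2) → Polynomial ℂ) = resL N (y.1 : Fin (N+2) → Polynomial ℂ) := h1
        have hvx : (x.1 : Fin (N+2) → Polynomial ℂ) (Fin.last (N+1)) = 0 := by
          rw [← hφval]; exact x.2
        have hvy : (y.1 : Fin (N+2) → Polynomial ℂ) (Fin.last (N+1)) = 0 := by
          rw [← hφval]; exact y.2
        have : (x.1 : Fin (N+2) → Polynomial ℂ) = (y.1 : Fin (N+2) → Polynomial ℂ) := by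
          funext i
          induction i using Fin.lastCases with
          | last => rw [hvx, hvy]
          | cast k => exact congrFun hres k
        exact Subtype.ext (Subtype.ext this)
      refine le_trans (LinearMap.rank_le_of_injective _ hinj) ?_
      refine ih U' ?_ ?_
      · rintro u ⟨x, hx, rfl⟩ w ⟨y, hy, rfl⟩
        rw [htrans x hx, htrans y hy]
        exact hcommU _ x.2 _ y.2
      · rintro u ⟨x, hx, rfl⟩
        rw [htrans x hx]
        exact hcommL _ x.2
    have hrankrange : Module.rank ℂ (LinearMap.range φ) ≤ 1 := by
      by_cases hex : ∃ A₀ : ↥U, φ A₀ ≠ 0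
      · obtain ⟨A₀, hg⟩ := hex
        set g := φ A₀ with hgdef
        have hsub : LinearMap.range φ ≤ Submodule.span ℂ ({g} : Set (Polynomial ℂ)) := by
          rintro _ ⟨x, rfl⟩
          by_cases hB : φ x = 0
          · rw [hB]; exact Submodule.zero_mem _
          · have hPA : PhiL (N+1) (A₀ : Fin (N+2) → Polynomial ℂ) = Phi (N+1) (extF (A₀ : Fin (N+2) → Polynomial ℂ)) := PhiL_eq_ext _
            have hPB : PhiL (N+1) (x : Fin (N+2) → Polynomial ℂ) = Phi (N+1) (extF (x : Fin (N+2) → Polynomial ℂ)) := PhiL_eq_ext _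
            have hPAtop : extF (A₀ : Fin (N+2) → Polynomial ℂ) (N+1) = g := by
              rw [extF_top, hgdef, hφval]
            have hPBtop : extF (x : Fin (N+2) → Polynomial ℂ) (N+1) = φ x := by
              rw [extF_top, hφval]
            have hct := comm_top (a := N+1) (b := N+1) (by omega) (by omega) hPA hPB
              (hcommU _ A₀.2 _ x.2)
            rw [hPAtop, hPBtop] at hct
            have hcast : ((N+1 : ℕ) : ℂ) ≠ 0 := Nat.cast_ne_zero.mpr (by omega)
            have hww : g * derivative (φ x) = (φ x) * derivative g :=
              smul_right_injective (Polynomial ℂ) hcast hct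
            obtain ⟨c, hc⟩ := wronskian_aux ((φ x).natDegree) g (φ x) (le_refl _) hg hww
            exact Submodule.mem_span_singleton.mpr ⟨c, hc.symm⟩
        calc Module.rank ℂ (LinearMap.range φ)
            ≤ Module.rank ℂ (Submodule.span ℂ ({g} : Set (Polynomial ℂ))) :=
              Submodule.rank_mono hsub
          _ ≤ Cardinal.mk ({g} : Set (Polynomial ℂ)) := rank_span_le _
          _ ≤ 1 := le_of_eq (Cardinal.mk_singleton _)
      · push_neg at hex
        have : LinearMap.range φ = ⊥ := by
          rw [LinearMap.range_eq_bot]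
          apply LinearMap.ext
          intro x
          exact hex x
        rw [this]
        simp
    calc Module.rank ℂ U
        = Module.rank ℂ (LinearMap.range φ) + Module.rank ℂ (LinearMap.ker φ) :=
          (LinearMap.rank_range_add_rank_ker φ).symm
      _ ≤ 1 + ((N : Cardinal) + 1) := add_le_add hrankrange hrankker
      _ = ((N+1 : ℕ) : Cardinal) + 1 := by push_cast; ring

lemma one_eq_Phi : (1 : EndP) = Phi 0 (fun _ => 1) := by
  rw [Phi, Finset.sum_range_one]
  apply LinearMap.ext; intro f
  rw [Module.End.one_apply, mop_apply]
  rw [pow_zero, one_mul]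
  rfl

lemma pow_rep {A : EndP} {a : ℕ} {P : ℕ → Polynomial ℂ} (hA : A = Phi a P) :
    ∀ i : ℕ, ∃ R, A ^ i = Phi (i * a) R := by
  intro i
  induction i with
  | zero => exact ⟨fun _ => 1, by rw [pow_zero, zero_mul]; exact one_eq_Phi⟩
  | succ i ih =>
    obtain ⟨R, hR⟩ := ih
    refine ⟨Rp R P (i*a) a, ?_⟩
    rw [pow_succ, hR, hA, Phi_mul]
    congr 1
    ring

lemma mul_pow_rep {A B : EndP} {a b : ℕ} {P Q : ℕ → Polynomial ℂ}
    (hA : A = Phi a P) (hB : B = Phi b Q) (i j N : ℕ) (hN : i * a + j * b ≤ N) :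
    A ^ i * B ^ j ∈ RepSub N := by
  obtain ⟨R, hR⟩ := pow_rep hA i
  obtain ⟨S, hS⟩ := pow_rep hB j
  refine RepSub_mono hN (mem_RepSub.mpr ⟨Rp R S (i*a) (j*b), ?_⟩)
  rw [hR, hS, Phi_mul]

/-- An endomorphism of `ℂ[x]` "has order `n`" if it can be written as
`Σ_{j=0}^{n} P_j(X)∘D^j` with polynomial coefficients `P_j` and `P_n ≠ 0`. -/
def HasOrder (A : Module.End ℂ (Polynomial ℂ)) (n : ℕ) : Prop :=
  ∃ P : ℕ → Polynomial ℂ, P n ≠ 0 ∧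
    A = ∑ j ∈ Finset.range (n + 1), LinearMap.mulLeft ℂ (P j) * Dop ^ j

set_option maxHeartbeats 1000000 in
set_option synthInstance.maxHeartbeats 1000000 in
/-- (Burchnall–Chaundy lemma, Weyl algebra form) If `L` and `M` are commuting
ordinary differential operators with polynomial coefficients (elements of the
subalgebra of `End(ℂ[x])` generated by `D` and `X`), each of positive order,
then they are algebraically dependent over `ℂ`: there is a nonzero polynomial
`Q(λ, μ)` (here an element of `ℂ[λ][μ]`) with `Q(L, M) = 0`, where evaluation
substitutes `L` for `λ` and `M` for `μ`. -/
theorem burchnall_chaundy (L M : Module.End ℂ (Polynomial ℂ))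
    (hL : L ∈ Algebra.adjoin ℂ ({Dop, Xop} : Set (Module.End ℂ (Polynomial ℂ))))
    (hM : M ∈ Algebra.adjoin ℂ ({Dop, Xop} : Set (Module.End ℂ (Polynomial ℂ))))
    (hLord : ∃ n, 0 < n ∧ HasOrder L n)
    (hMord : ∃ n, 0 < n ∧ HasOrder M n)
    (hcomm : L * M = M * L) :
    ∃ Q : Polynomial (Polynomial ℂ), Q ≠ 0 ∧
      Polynomial.eval₂ (Polynomial.aeval L).toRingHom M Q = 0 := by
  classical
  obtain ⟨n, hn0, Pl, hPln, hLrepr⟩ := hLord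
  obtain ⟨m, hm0, Qm, hQmm, hMrepr⟩ := hMord
  have hn : 1 ≤ n := hn0
  have hm : 1 ≤ m := hm0
  have hLrep : L = Phi n Pl := hLrepr
  have hMrep : M = Phi m Qm := hMrepr
  set K := n + m with hK
  set N := K * K with hN
  -- adjoin facts
  have hLA : L ∈ Algebra.adjoin ℂ ({L, M} : Set EndP) := Algebra.subset_adjoin (by simp)
  have hMA : M ∈ Algebra.adjoin ℂ ({L, M} : Set EndP) := Algebra.subset_adjoin (by simp)
  have hcomL : ∀ A ∈ Algebra.adjoin ℂ ({L, M} : Set EndP), Commute L A := by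
    intro A hA
    refine Algebra.commute_of_mem_adjoin_of_forall_mem_commute hA ?_
    rintro b hb
    rcases Set.mem_insert_iff.mp hb with rfl | hb
    · exact Commute.refl _
    · rw [Set.mem_singleton_iff.mp hb]
      exact hcomm
  have hcomM : ∀ A ∈ Algebra.adjoin ℂ ({L, M} : Set EndP), Commute M A := by
    intro A hA
    refine Algebra.commute_of_mem_adjoin_of_forall_mem_commute hA ?_
    rintro b hb
    rcases Set.mem_insert_iff.mp hb with rfl | hb
    · exact hcomm.symm
    · rw [Set.mem_singleton_iff.mp hb]
      exact Commute.refl _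
  have hcomAdj : ∀ A ∈ Algebra.adjoin ℂ ({L, M} : Set EndP),
      ∀ B ∈ Algebra.adjoin ℂ ({L, M} : Set EndP), A * B = B * A := by
    intro A hA B hB
    refine Algebra.commute_of_mem_adjoin_of_forall_mem_commute hB ?_
    rintro b hb
    rcases Set.mem_insert_iff.mp hb with rfl | hb
    · exact ((hcomL A hA).symm : Commute A b)
    · rw [Set.mem_singleton_iff.mp hb]
      exact ((hcomM A hA).symm : Commute A M)
  -- the monomial family
  set v : Fin (K+1) × Fin (K+1) → EndP := fun x => L ^ (x.1 : ℕ) * M ^ (x.2 : ℕ) with hv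
  have hvrep : ∀ x, v x ∈ RepSub N := by
    intro x
    refine mul_pow_rep hLrep hMrep _ _ N ?_
    have h1 : (x.1 : ℕ) ≤ K := Nat.lt_succ_iff.mp x.1.isLt
    have h2 : (x.2 : ℕ) ≤ K := Nat.lt_succ_iff.mp x.2.isLt
    calc (x.1 : ℕ) * n + (x.2 : ℕ) * m ≤ K * n + K * m :=
          add_le_add (Nat.mul_le_mul_right n h1) (Nat.mul_le_mul_right m h2)
      _ = K * K := by rw [← Nat.mul_add]
  have hvadj : ∀ x, v x ∈ Algebra.adjoin ℂ ({L, M} : Set EndP) := by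
    intro x
    exact mul_mem (pow_mem hLA _) (pow_mem hMA _)
  have hcex : ∀ x, ∃ u, PhiL N u = v x := fun x => LinearMap.mem_range.mp (hvrep x)
  choose c hc using hcex
  set U : Submodule ℂ (Fin (N+1) → Polynomial ℂ) := Submodule.span ℂ (Set.range c) with hU
  have hUadj : ∀ u ∈ U, PhiL N u ∈ Algebra.adjoin ℂ ({L, M} : Set EndP) := by
    intro u hu
    have hmap : PhiL N u ∈ Submodule.map (PhiL N) U := ⟨u, hu, rfl⟩
    have hle : Submodule.map (PhiL N) U
        ≤ Subalgebra.toSubmodule (Algebra.adjoin ℂ ({L, M} : Set EndP)) := by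
      rw [hU, Submodule.map_span, Submodule.span_le]
      rintro _ ⟨_, ⟨x, rfl⟩, rfl⟩
      show PhiL N (c x) ∈ (Subalgebra.toSubmodule (Algebra.adjoin ℂ ({L, M} : Set EndP)) : Set EndP)
      rw [hc x]
      exact hvadj x
    exact hle hmap
  have hcommU : ∀ u ∈ U, ∀ w ∈ U, PhiL N u * PhiL N w = PhiL N w * PhiL N u :=
    fun u hu w hw => hcomAdj _ (hUadj u hu) _ (hUadj w hw)
  have hcommUL : ∀ u ∈ U, PhiL N u * L = L * PhiL N u :=
    fun u hu => ((hcomL _ (hUadj u hu)).symm : Commute _ L)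
  have hrank : Module.rank ℂ U ≤ (N : Cardinal) + 1 :=
    rank_le_main L n hn Pl hLrep hPln N U hcommU hcommUL
  -- dependence
  have hdep : ¬ LinearIndependent ℂ v := by
    intro hind
    have hindc : LinearIndependent ℂ c := by
      refine LinearIndependent.of_comp (PhiL N) ?_
      have he : (⇑(PhiL N) ∘ c) = v := funext hc
      rw [he]; exact hind
    set c' : Fin (K+1) × Fin (K+1) → ↥U :=
      fun x => (⟨c x, Submodule.subset_span (Set.mem_range_self x)⟩ : ↥U) with hc'
    have hindc' : LinearIndependent ℂ c' := by
      refine LinearIndependent.of_comp U.subtype ?_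
      have he : (⇑U.subtype ∘ c') = c := rfl
      rw [he]; exact hindc
    have hcard := hindc'.cardinal_le_rank
    have h2 : (Cardinal.mk (Fin (K+1) × Fin (K+1))) = (((K+1) * (K+1) : ℕ) : Cardinal) := by
      simp [Cardinal.mk_fintype]
    have h3 : (((K+1)*(K+1) : ℕ) : Cardinal) ≤ (((N+1 : ℕ)) : Cardinal) := by
      rw [← h2]
      refine hcard.trans (hrank.trans (le_of_eq ?_))
      push_cast
      ring
    have h5 : (K+1)*(K+1) ≤ N + 1 := Nat.cast_le.mp h3
    have hKex : (K+1)*(K+1) = K*K + 2*K + 1 := by ring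
    omega
  obtain ⟨g, hgsum, x₀, hgx₀⟩ := Fintype.not_linearIndependent_iff.mp hdep
  refine ⟨∑ x : Fin (K+1) × Fin (K+1),
      Polynomial.C (Polynomial.C (g x) * Polynomial.X ^ (x.1 : ℕ)) * Polynomial.X ^ (x.2 : ℕ),
      ?_, ?_⟩
  · intro h0
    apply hgx₀
    have hval : ((∑ x : Fin (K+1) × Fin (K+1),
        Polynomial.C (Polynomial.C (g x) * Polynomial.X ^ (x.1 : ℕ)) * Polynomial.X ^ (x.2 : ℕ)).coeff
          (x₀.2 : ℕ)).coeff (x₀.1 : ℕ) = g x₀ := by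
      rw [Polynomial.finset_sum_coeff]
      have he : ∀ x : Fin (K+1) × Fin (K+1),
          (Polynomial.C (Polynomial.C (g x) * Polynomial.X ^ (x.1 : ℕ))
            * Polynomial.X ^ (x.2 : ℕ)).coeff (x₀.2 : ℕ)
          = if (x₀.2 : ℕ) = (x.2 : ℕ) then Polynomial.C (g x) * Polynomial.X ^ (x.1 : ℕ) else 0 :=
        fun x => Polynomial.coeff_C_mul_X_pow _ _ _
      rw [Finset.sum_congr rfl (fun x _ => he x), Polynomial.finset_sum_coeff]
      rw [Finset.sum_eq_single x₀]
      · rw [if_pos rfl, Polynomial.coeff_C_mul_X_pow, if_pos rfl]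
      · intro x _ hxne
        by_cases h1 : (x₀.2 : ℕ) = (x.2 : ℕ)
        · rw [if_pos h1, Polynomial.coeff_C_mul_X_pow]
          have h2 : (x₀.1 : ℕ) ≠ (x.1 : ℕ) := by
            intro h2
            exact hxne (Prod.ext (Fin.ext h2.symm) (Fin.ext h1.symm))
          rw [if_neg h2]
        · rw [if_neg h1, Polynomial.coeff_zero]
      · intro hx
        exact absurd (Finset.mem_univ x₀) hx
    rw [h0] at hval
    simpa using hval.symm
  · rw [Polynomial.eval₂_finset_sum]
    have he : ∀ x : Fin (K+1) × Fin (K+1),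
        Polynomial.eval₂ (Polynomial.aeval L).toRingHom M
          (Polynomial.C (Polynomial.C (g x) * Polynomial.X ^ (x.1 : ℕ)) * Polynomial.X ^ (x.2 : ℕ))
        = g x • v x := by
      intro x
      rw [Polynomial.C_mul_X_pow_eq_monomial, Polynomial.eval₂_monomial]
      show (Polynomial.aeval L) (Polynomial.C (g x) * Polynomial.X ^ (x.1 : ℕ)) * M ^ (x.2 : ℕ)
        = g x • v x
      rw [map_mul, Polynomial.aeval_C, map_pow, Polynomial.aeval_X]
      rw [Algebra.algebraMap_eq_smul_one]
      rw [smul_mul_assoc, one_mul, smul_mul_assoc]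
    rw [Finset.sum_congr rfl (fun x _ => he x)]
    exact hgsum
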